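/- arXiv:cs/0310021 — 3 statements merged into one kernel-verified Lean document; each statement's English description precedes it below -/
import Mathlib

section
/- For crisp relations Q ⊆ A×B, R ⊆ B×C, S ⊆ C×D, the pseudo-associativity Q ◁ (R ▷ S) = (Q ◁ R) ▷ S holds, where (R ◁ S) = {(x,z) | ∀y, xRy → ySz} and (R ▷ S) = {(x,z) | ∀y, ySz → xRy}. -/
def BKsub {α β γ : Type*} (R : α → β → Prop) (S : β → γ → Prop) : α → γ → Prop :=
  fun x z => ∀ y, R x y → S y z

def BKsup {α β γ : Type*} (R : α → β → Prop) (S : β → γ → Prop) : α → γ → Prop :=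
  fun x z => ∀ y, S y z → R x y

theorem pseudo_assoc_sub_sup {A B C D : Type*} (Q : A → B → Prop) (R : B → C → Prop)
    (S : C → D → Prop) : BKsub Q (BKsup R S) = BKsup (BKsub Q R) S := by
  funext x z
  simp only [BKsub, BKsup, eq_iff_iff]
  exact ⟨fun h c hc b hb => h b hb c hc, fun h b hb c hc => h c hc b hb⟩
end

section
/- A crisp relation R on a set X is a preorder (reflexive and transitive) if and only if R = R ▷ R⁻¹, where R⁻¹ is the converse relation. -/
theorem preorder_iff_sup_converse {X : Type*} (R : X → X → Prop) :
    (Reflexive R ∧ Transitive R) ↔ R = BKsup R (fun x y => R y x) := by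
  constructor
  · rintro ⟨hr, ht⟩
    funext x z
    simp only [BKsup, eq_iff_iff]
    exact ⟨fun hxz y hzy => ht hxz hzy, fun h => h z (hr z)⟩
  · intro h
    constructor
    · intro x
      have hx : BKsup R (fun a b => R b a) x x := fun y hy => hy
      rw [h]; exact hx
    · intro x y z hxy hyz
      rw [h] at hxy hyz ⊢
      intro w hzw
      exact hxy w (hyz w hzw)
end

section
/- A crisp relation R on a set X is an equivalence relation if and only if R = R □ R⁻¹, where the square product is defined by x(R□S)z ↔ ∀y, (xRy ↔ ySz). -/
def BKsq {α β γ : Type*} (R : α → β → Prop) (S : β → γ → Prop) : α → γ → Prop :=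
  fun x z => ∀ y, R x y ↔ S y z

theorem equivalence_iff_sq_converse {X : Type*} (R : X → X → Prop) :
    Equivalence R ↔ R = BKsq R (fun x y => R y x) := by
  constructor
  · intro h
    funext x z
    apply propext
    constructor
    · intro hxz y
      exact ⟨fun hxy => h.trans (h.symm hxz) hxy, fun hzy => h.trans hxz hzy⟩
    · intro hb
      exact (hb z).mpr (h.refl z)
  · intro h
    have refl : ∀ x, R x x := fun x => (congrFun (congrFun h x) x) ▸ (fun y => Iff.rfl)
    have key : ∀ x z, R x z ↔ ∀ y, R x y ↔ R z y :=
      fun x z => iff_of_eq (congrFun (congrFun h x) z)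
    refine ⟨refl, ?_, ?_⟩
    · intro x y hxy
      exact (key y x).mpr fun w => ((key x y).mp hxy w).symm
    · intro x y z hxy hyz
      exact (key x z).mpr fun w => ((key x y).mp hxy w).trans ((key y z).mp hyz w)
end
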